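/- The inverse map to F: given a pair (ω_R, ω_B) of one-colored oriented configurations on the same multigraph G_N with ∂r(ω_R) = f+g and ∂b(ω_B) = −f+g, define a two-colored configuration ω̃ with orientations those of ω_R, coloring each edge blue if its orientations in ω_R and ω_B agree and red otherwise; then F(ω̃) = (ω_R, ω_B), and ω̃ has red source f and blue source g. -/

import Mathlib

open Finset

/-- A finite multigraph on vertex set `V`: a finite set of distinguishable
strands (edges), each with an unordered pair of distinct endpoints. -/
structure MG (V : Type) where
  Strand : Type
  [fin : Fintype Strand]
  [dec : DecidableEq Strand]
  ends : Strand → Sym2 V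
  noloop : ∀ s, ¬ (ends s).IsDiag

attribute [instance] MG.fin MG.dec

variable {V : Type} [Fintype V] [DecidableEq V]

/-- An oriented (one-colored) configuration on the multigraph `G`. -/
structure Config (G : MG V) where
  orient : G.Strand → V × V
  compat : ∀ s, Sym2.mk (orient s).1 (orient s).2 = G.ends s

/-- A two-colored oriented configuration on the multigraph `G`
(`red s = true` means the strand `s` is red, otherwise it is blue). -/
structure Config2 (G : MG V) where
  orient : G.Strand → V × V
  red : G.Strand → Bool
  compat : ∀ s, Sym2.mk (orient s).1 (orient s).2 = G.ends s

/-- The current induced by an oriented configuration. -/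
def Config.cur {G : MG V} (ω : Config G) (x y : V) : ℕ :=
  (univ.filter fun s => ω.orient s = (x, y)).card

/-- The red current of a two-colored configuration. -/
def Config2.redCur {G : MG V} (ω : Config2 G) (x y : V) : ℕ :=
  (univ.filter fun s => ω.orient s = (x, y) ∧ ω.red s = true).card

/-- The blue current of a two-colored configuration. -/
def Config2.blueCur {G : MG V} (ω : Config2 G) (x y : V) : ℕ :=
  (univ.filter fun s => ω.orient s = (x, y) ∧ ω.red s = false).card

/-- The source function of a current. -/
def csrc (n : V → V → ℕ) (x : V) : ℤ :=
  ∑ y, ((n x y : ℤ) - n y x)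

/-- The bijection `F`: paint everything red keeping orientations for the first
component; reverse red strands and paint everything blue for the second. -/
def F {G : MG V} (ω : Config2 G) : Config G × Config G :=
  (⟨ω.orient, ω.compat⟩,
   ⟨fun s => if ω.red s then (ω.orient s).swap else ω.orient s, by
      intro s
      by_cases h : ω.red s <;> simp [h, ← ω.compat s, Sym2.eq_swap]⟩)

/-- The inverse map to `F`: the orientation is that of the first component,
and a strand is colored blue exactly when its orientations in the two
components agree (red otherwise). -/
def Finv {G : MG V} (p : Config G × Config G) : Config2 G :=
  ⟨p.1.orient, fun s => decide (p.1.orient s ≠ p.2.orient s), p.1.compat⟩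

lemma Config.ext' {V : Type} [Fintype V] [DecidableEq V] {G : MG V}
    {a b : Config G} (h : a.orient = b.orient) : a = b := by
  cases a; cases b; simp_all

lemma orient_eq_or_swap {V : Type} [Fintype V] [DecidableEq V] {G : MG V}
    (p : Config G × Config G) (s : G.Strand) :
    p.2.orient s = p.1.orient s ∨ p.2.orient s = (p.1.orient s).swap := by
  have h := (p.2.compat s).trans (p.1.compat s).symm
  rcases h1 : p.1.orient s with ⟨x, y⟩
  rcases h2 : p.2.orient s with ⟨a, b⟩
  rw [h1, h2] at h
  rw [Sym2.mk_eq_mk_iff] at h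
  rcases h with h | h <;> simp_all [Prod.ext_iff]

lemma filter_split {α : Type*} [Fintype α] [DecidableEq α]
    (P : α → Prop) [DecidablePred P] (q : α → Bool) :
    (univ.filter fun s => P s ∧ q s = true).card +
      (univ.filter fun s => P s ∧ q s = false).card =
    (univ.filter P).card := by
  rw [← Finset.filter_filter, ← Finset.filter_filter]
  have := Finset.card_filter_add_card_filter_not
    (s := univ.filter P) (p := fun s => q s = true)
  simpa using this

/-- Given `(ω_R, ω_B)` with `∂r(ω_R) = f+g` and `∂b(ω_B) = −f+g`, the
configuration `ω̃ = Finv (ω_R, ω_B)` satisfies `F(ω̃) = (ω_R, ω_B)` and has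
red source `f` and blue source `g`. -/
theorem Finv_section (G : MG V) (f g : V → ℤ)
    (hf : ∑ v, f v = 0) (hg : ∑ v, g v = 0)
    (p : Config G × Config G)
    (h1 : ∀ x, csrc p.1.cur x = f x + g x)
    (h2 : ∀ x, csrc p.2.cur x = -f x + g x) :
    F (Finv p) = p ∧
    (∀ x, csrc (Finv p).redCur x = f x) ∧
    (∀ x, csrc (Finv p).blueCur x = g x) := by
  -- Part 1
  have hF : F (Finv p) = p := by
    refine Prod.ext (Config.ext' rfl) (Config.ext' ?_)
    funext s
    show (if ((Finv p).red s) then ((Finv p).orient s).swap else (Finv p).orient s)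
        = p.2.orient s
    by_cases h : p.1.orient s = p.2.orient s
    · simp [Finv, h]
    · rcases orient_eq_or_swap p s with h' | h'
      · exact absurd h'.symm h
      · simp [Finv, h, h']
  -- current decompositions
  have hA : ∀ x y, p.1.cur x y = (Finv p).redCur x y + (Finv p).blueCur x y := by
    intro x y
    exact (filter_split (fun s => p.1.orient s = (x, y)) (Finv p).red).symm
  have hB : ∀ x y, p.2.cur x y = (Finv p).redCur y x + (Finv p).blueCur x y := by
    intro x y
    have := (filter_split (fun s => p.2.orient s = (x, y)) (Finv p).red).symm
    rw [Config.cur, this]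
    congr 1
    · -- red part equals redCur y x
      show _ = Config2.redCur _ y x
      unfold Config2.redCur
      apply congrArg
      apply Finset.filter_congr
      intro s _
      have hred : (Finv p).red s = true ↔ p.1.orient s ≠ p.2.orient s := by
        simp [Finv]
      constructor
      · rintro ⟨h2s, hr⟩
        refine ⟨?_, hr⟩
        show p.1.orient s = (y, x)
        have hne := hred.mp hr
        rcases orient_eq_or_swap p s with h' | h'
        · exact absurd h'.symm hne
        · rw [h2s] at h'
          rw [← Prod.swap_swap (p.1.orient s), ← h', Prod.swap_prod_mk]
      · rintro ⟨h1s, hr⟩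
        refine ⟨?_, hr⟩
        have hne := hred.mp hr
        replace h1s : p.1.orient s = (y, x) := h1s
        rcases orient_eq_or_swap p s with h' | h'
        · exact absurd h'.symm hne
        · rw [h', h1s, Prod.swap_prod_mk]
    · -- blue part equals blueCur x y
      show _ = Config2.blueCur _ x y
      unfold Config2.blueCur
      apply congrArg
      apply Finset.filter_congr
      intro s _
      have hblue : (Finv p).red s = false ↔ p.1.orient s = p.2.orient s := by
        simp [Finv]
      constructor
      · rintro ⟨h2s, hr⟩
        exact ⟨show p.1.orient s = (x, y) by rw [hblue.mp hr, h2s], hr⟩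
      · rintro ⟨h1s, hr⟩
        exact ⟨by rw [← hblue.mp hr]; exact h1s, hr⟩
  -- source decompositions
  have hAs : ∀ x, csrc p.1.cur x
      = csrc (Finv p).redCur x + csrc (Finv p).blueCur x := by
    intro x
    unfold csrc
    rw [← Finset.sum_add_distrib]
    apply Finset.sum_congr rfl
    intro y _
    rw [hA x y, hA y x]
    push_cast
    ring
  have hBs : ∀ x, csrc p.2.cur x
      = csrc (Finv p).blueCur x - csrc (Finv p).redCur x := by
    intro x
    unfold csrc
    rw [← Finset.sum_sub_distrib]
    apply Finset.sum_congr rfl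
    intro y _
    rw [hB x y, hB y x]
    push_cast
    ring
  refine ⟨hF, fun x => ?_, fun x => ?_⟩
  · have e1 := (hAs x).symm.trans (h1 x)
    have e2 := (hBs x).symm.trans (h2 x)
    linarith
  · have e1 := (hAs x).symm.trans (h1 x)
    have e2 := (hBs x).symm.trans (h2 x)
    linarith
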